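/- Suppose the unit ball of the source norm is rotund (strictly convex), meaning the unit sphere coincides with the set of extreme points of the unit ball. Then a set K ⊆ ℝ^d is Capra-convex if and only if: K is a cone, K ∪ {0} is closed, and 0 ∈ K ⟺ 0 ∈ cl conv(ρ(K)). -/

import Mathlib

open Classical in
noncomputable def radProj {d : ℕ} (N : EuclideanSpace ℝ (Fin d) → ℝ)
    (x : EuclideanSpace ℝ (Fin d)) : EuclideanSpace ℝ (Fin d) :=
  if x = 0 then 0 else (N x)⁻¹ • x

noncomputable def capraConj {d : ℕ} (N : EuclideanSpace ℝ (Fin d) → ℝ)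
    (f : EuclideanSpace ℝ (Fin d) → EReal) (y : EuclideanSpace ℝ (Fin d)) : EReal :=
  ⨆ x : EuclideanSpace ℝ (Fin d), ((inner ℝ (radProj N x) y : ℝ) : EReal) - f x

open Classical in
noncomputable def ind {d : ℕ} (X : Set (EuclideanSpace ℝ (Fin d)))
    (x : EuclideanSpace ℝ (Fin d)) : EReal :=
  if x ∈ X then 0 else ⊤

lemma capraConj_ind {d : ℕ} (N : EuclideanSpace ℝ (Fin d) → ℝ)
    (K : Set (EuclideanSpace ℝ (Fin d))) (y : EuclideanSpace ℝ (Fin d)) :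
    capraConj N (ind K) y = ⨆ a ∈ radProj N '' K, ((inner ℝ a y : ℝ) : EReal) := by
  rw [iSup_image]
  unfold capraConj
  apply le_antisymm
  · refine iSup_le fun x => ?_
    by_cases hx : x ∈ K
    · rw [ind, if_pos hx, sub_zero]
      exact le_iSup₂ (f := fun x (_ : x ∈ K) => ((inner ℝ (radProj N x) y : ℝ) : EReal)) x hx
    · rw [ind, if_neg hx, EReal.sub_top]
      exact bot_le
  · refine iSup₂_le fun x hx => ?_
    have : ((inner ℝ (radProj N x) y : ℝ) : EReal) - ind K x = ((inner ℝ (radProj N x) y : ℝ) : EReal) := by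
      rw [ind, if_pos hx, sub_zero]
    rw [← this]
    exact le_iSup (fun x => ((inner ℝ (radProj N x) y : ℝ) : EReal) - ind K x) x


noncomputable def capraBiconj {d : ℕ} (N : EuclideanSpace ℝ (Fin d) → ℝ)
    (f : EuclideanSpace ℝ (Fin d) → EReal) (x : EuclideanSpace ℝ (Fin d)) : EReal :=
  ⨆ y : EuclideanSpace ℝ (Fin d), ((inner ℝ (radProj N x) y : ℝ) : EReal) - capraConj N f y

def IsCapraConvex {d : ℕ} (N : EuclideanSpace ℝ (Fin d) → ℝ)
    (X : Set (EuclideanSpace ℝ (Fin d))) : Prop :=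
  ind X = capraBiconj N (ind X)

def coneHull {d : ℕ} (A : Set (EuclideanSpace ℝ (Fin d))) : Set (EuclideanSpace ℝ (Fin d)) :=
  {y | ∃ a ∈ A, ∃ l : ℝ, 0 < l ∧ y = l • a}

open Classical in
lemma capraBiconj_ind {d : ℕ} (N : EuclideanSpace ℝ (Fin d) → ℝ)
    (K : Set (EuclideanSpace ℝ (Fin d))) (x : EuclideanSpace ℝ (Fin d)) :
    capraBiconj N (ind K) x
      = if radProj N x ∈ closure (convexHull ℝ (radProj N '' K)) then (0 : EReal) else ⊤ := by
  set A : Set (EuclideanSpace ℝ (Fin d)) := radProj N '' K with hA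
  set u : EuclideanSpace ℝ (Fin d) := radProj N x with hu
  have hconj : ∀ y, capraConj N (ind K) y = ⨆ a ∈ A, ((inner ℝ a y : ℝ) : EReal) :=
    capraConj_ind N K
  rcases K.eq_empty_or_nonempty with hK | hK
  · have hAe : A = ∅ := by simp [hA, hK]
    have hC : closure (convexHull ℝ A) = ∅ := by simp [hAe]
    rw [if_neg (by simp [hC])]
    unfold capraBiconj
    rw [eq_top_iff]
    calc (⊤ : EReal) = ((inner ℝ u 0 : ℝ) : EReal) - capraConj N (ind K) 0 := by
          rw [hconj 0, hAe]
          simp [EReal.coe_sub_bot]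
      _ ≤ _ := le_iSup (fun y => ((inner ℝ u y : ℝ) : EReal) - capraConj N (ind K) y) 0
  · have hAne : A.Nonempty := hK.image _
    by_cases hmem : u ∈ closure (convexHull ℝ A)
    · rw [if_pos hmem]
      unfold capraBiconj
      apply le_antisymm
      · refine iSup_le fun y => ?_
        have hle : ((inner ℝ u y : ℝ) : EReal) ≤ capraConj N (ind K) y := by
          rw [hconj y]
          rcases eq_top_or_lt_top (⨆ a ∈ A, ((inner ℝ a y : ℝ) : EReal)) with htop | hlt
          · rw [htop]; exact le_top
          · have hne_bot : (⨆ a ∈ A, ((inner ℝ a y : ℝ) : EReal)) ≠ ⊥ := by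
              obtain ⟨a0, ha0⟩ := hAne
              refine ne_bot_of_le_ne_bot (by simp : ((inner ℝ a0 y : ℝ) : EReal) ≠ ⊥) ?_
              exact le_iSup₂ (f := fun a (_ : a ∈ A) => ((inner ℝ a y : ℝ) : EReal)) a0 ha0
            obtain ⟨r, hr⟩ : ∃ r : ℝ, (⨆ a ∈ A, ((inner ℝ a y : ℝ) : EReal)) = (r : EReal) :=
              ⟨(⨆ a ∈ A, ((inner ℝ a y : ℝ) : EReal)).toReal,
                (EReal.coe_toReal hlt.ne hne_bot).symm⟩
            rw [hr]
            have hD : ∀ a ∈ A, (inner ℝ a y : ℝ) ≤ r := by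
              intro a ha
              have := le_iSup₂ (f := fun a (_ : a ∈ A) => ((inner ℝ a y : ℝ) : EReal)) a ha
              rw [hr] at this
              exact EReal.coe_le_coe_iff.1 this
            have hlin : IsLinearMap ℝ (fun v : EuclideanSpace ℝ (Fin d) => (inner ℝ v y : ℝ)) :=
              ⟨fun a b => inner_add_left a b y, fun c a => real_inner_smul_left a y c⟩
            have hDconv : Convex ℝ {v : EuclideanSpace ℝ (Fin d) | (inner ℝ v y : ℝ) ≤ r} :=
              convex_halfSpace_le hlin r
            have hDclosed : IsClosed {v : EuclideanSpace ℝ (Fin d) | (inner ℝ v y : ℝ) ≤ r} :=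
              isClosed_le (Continuous.inner continuous_id continuous_const) continuous_const
            have : closure (convexHull ℝ A) ⊆ {v : EuclideanSpace ℝ (Fin d) | (inner ℝ v y : ℝ) ≤ r} :=
              closure_minimal (convexHull_min hD hDconv) hDclosed
            exact EReal.coe_le_coe_iff.2 (this hmem)
        calc ((inner ℝ u y : ℝ) : EReal) - capraConj N (ind K) y
            ≤ ((inner ℝ u y : ℝ) : EReal) - ((inner ℝ u y : ℝ) : EReal) :=
              EReal.sub_le_sub le_rfl hle
          _ = 0 := by rw [← EReal.coe_sub, sub_self]; rfl
      · calc (0 : EReal) = ((inner ℝ u 0 : ℝ) : EReal) - capraConj N (ind K) 0 := by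
              rw [hconj 0]
              have h0 : (⨆ a ∈ A, ((inner ℝ a (0:EuclideanSpace ℝ (Fin d)) : ℝ) : EReal)) = (0 : EReal) := by
                have : ∀ a ∈ A, ((inner ℝ a (0:EuclideanSpace ℝ (Fin d)) : ℝ) : EReal) = (0 : EReal) := by
                  intro a _; simp
                calc (⨆ a ∈ A, ((inner ℝ a (0:EuclideanSpace ℝ (Fin d)) : ℝ) : EReal))
                    = ⨆ a ∈ A, (0 : EReal) := by
                      refine iSup_congr fun a => iSup_congr fun ha => this a ha
                  _ = 0 := biSup_const hAne
              rw [h0]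
              simp
          _ ≤ _ := le_iSup (fun y => ((inner ℝ u y : ℝ) : EReal) - capraConj N (ind K) y) 0
    · rw [if_neg hmem]
      unfold capraBiconj
      rw [EReal.eq_top_iff_forall_lt]
      intro r
      obtain ⟨f, c, hfc, hcu⟩ :=
        geometric_hahn_banach_closed_point ((convex_convexHull ℝ A).closure) isClosed_closure hmem
      set w : EuclideanSpace ℝ (Fin d) := (InnerProductSpace.toDual ℝ (EuclideanSpace ℝ (Fin d))).symm f with hw
      have hwf : ∀ v : EuclideanSpace ℝ (Fin d), (inner ℝ w v : ℝ) = f v := fun v => InnerProductSpace.toDual_symm_apply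
      have hε : 0 < f u - c := sub_pos.2 hcu
      set t : ℝ := (|r| + 1) / (f u - c) with ht
      have htpos : 0 < t := div_pos (by positivity) hε
      have hconjle : capraConj N (ind K) (t • w) ≤ ((t * c : ℝ) : EReal) := by
        rw [hconj]
        refine iSup₂_le fun a ha => ?_
        have haC : a ∈ closure (convexHull ℝ A) := subset_closure (subset_convexHull ℝ A ha)
        have : (inner ℝ a (t • w) : ℝ) = t * f a := by
          rw [real_inner_smul_right, real_inner_comm, hwf]
        rw [this]
        exact EReal.coe_le_coe_iff.2 (mul_le_mul_of_nonneg_left (hfc a haC).le htpos.le)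
      have huval : (inner ℝ u (t • w) : ℝ) = t * f u := by
        rw [real_inner_smul_right, real_inner_comm, hwf]
      have key : ((t * f u - t * c : ℝ) : EReal)
          ≤ ((inner ℝ u (t • w) : ℝ) : EReal) - capraConj N (ind K) (t • w) := by
        rw [huval, EReal.coe_sub]
        exact EReal.sub_le_sub le_rfl hconjle
      have hrlt : (r : EReal) < ((t * f u - t * c : ℝ) : EReal) := by
        rw [EReal.coe_lt_coe_iff, ← mul_sub, ht, div_mul_cancel₀ _ hε.ne']
        calc r ≤ |r| := le_abs_self r
          _ < |r| + 1 := lt_add_one _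
      exact hrlt.trans_le
        (key.trans (le_iSup (fun y => ((inner ℝ u y : ℝ) : EReal) - capraConj N (ind K) y) (t • w)))




section NormFacts
variable {d : ℕ} {N : EuclideanSpace ℝ (Fin d) → ℝ}
  (hN0 : ∀ x : EuclideanSpace ℝ (Fin d), N x = 0 ↔ x = 0)
  (hNh : ∀ (a : ℝ) (x : EuclideanSpace ℝ (Fin d)), N (a • x) = |a| * N x)
  (hNt : ∀ x y : EuclideanSpace ℝ (Fin d), N (x + y) ≤ N x + N y)

include hN0 hNh in
lemma N_zero : N 0 = 0 := (hN0 0).2 rfl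

include hN0 hNh hNt in
lemma N_nonneg : ∀ x, 0 ≤ N x := by
  intro x
  have h1 : N ((-1 : ℝ) • x) = N x := by rw [hNh]; simp
  have h2 : N (x + (-1 : ℝ) • x) ≤ N x + N ((-1:ℝ) • x) := hNt _ _
  have h3 : x + (-1 : ℝ) • x = 0 := by simp
  rw [h3, N_zero hN0 hNh, h1] at h2
  linarith

include hN0 hNh hNt in
lemma N_sum_le {ι : Type*} (s : Finset ι) (f : ι → EuclideanSpace ℝ (Fin d)) :
    N (∑ i ∈ s, f i) ≤ ∑ i ∈ s, N (f i) := by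
  classical
  induction s using Finset.induction with
  | empty => simp [N_zero hN0 hNh]
  | insert a s hnotin ih =>
    rw [Finset.sum_insert hnotin, Finset.sum_insert hnotin]
    exact le_trans (hNt _ _) (by linarith)

include hN0 hNh hNt in
lemma N_upper : ∃ M : ℝ, 0 ≤ M ∧ ∀ z, N z ≤ M * ‖z‖ := by
  classical
  refine ⟨∑ i : Fin d, N (EuclideanSpace.single i (1:ℝ)), Finset.sum_nonneg fun i _ =>
    N_nonneg hN0 hNh hNt _, fun z => ?_⟩
  have hrepr : ∑ i : Fin d, z i • EuclideanSpace.single i (1:ℝ) = z := by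
    have := (EuclideanSpace.basisFun (Fin d) ℝ).sum_repr z
    simpa [EuclideanSpace.basisFun_apply, EuclideanSpace.basisFun_repr] using this
  calc N z = N (∑ i : Fin d, z i • EuclideanSpace.single i (1:ℝ)) := by rw [hrepr]
    _ ≤ ∑ i : Fin d, N (z i • EuclideanSpace.single i (1:ℝ)) :=
        N_sum_le hN0 hNh hNt _ _
    _ = ∑ i : Fin d, |z i| * N (EuclideanSpace.single i (1:ℝ)) := by
        simp [hNh]
    _ ≤ ∑ i : Fin d, ‖z‖ * N (EuclideanSpace.single i (1:ℝ)) := by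
        refine Finset.sum_le_sum fun i _ => ?_
        refine mul_le_mul_of_nonneg_right ?_ (N_nonneg hN0 hNh hNt _)
        calc |z i| = |(inner ℝ (EuclideanSpace.single i (1:ℝ)) z : ℝ)| := by
              rw [EuclideanSpace.inner_single_left]; simp
          _ ≤ ‖EuclideanSpace.single i (1:ℝ)‖ * ‖z‖ := abs_real_inner_le_norm _ _
          _ = ‖z‖ := by rw [EuclideanSpace.norm_single]; simp
    _ = (∑ i : Fin d, N (EuclideanSpace.single i (1:ℝ))) * ‖z‖ := by
        rw [Finset.sum_mul]
        exact Finset.sum_congr rfl fun i _ => mul_comm _ _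

include hN0 hNh hNt in
lemma N_continuous : Continuous N := by
  obtain ⟨M, hM0, hM⟩ := N_upper hN0 hNh hNt
  have hlip : ∀ a b : EuclideanSpace ℝ (Fin d), |N a - N b| ≤ M * ‖a - b‖ := by
    intro a b
    rw [abs_sub_le_iff]
    constructor
    · have := hNt (a - b) b
      rw [sub_add_cancel] at this
      have h2 := hM (a - b)
      linarith
    · have := hNt (b - a) a
      rw [sub_add_cancel] at this
      have h2 := hM (b - a)
      rw [norm_sub_rev] at h2
      linarith
  rw [Metric.continuous_iff]
  intro b ε hε
  refine ⟨ε / (M + 1), by positivity, fun a ha => ?_⟩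
  rw [Real.dist_eq]
  calc |N a - N b| ≤ M * ‖a - b‖ := hlip a b
    _ ≤ (M + 1) * ‖a - b‖ := by nlinarith [norm_nonneg (a - b)]
    _ < ε := by
        rw [dist_eq_norm] at ha
        rw [← lt_div_iff₀' (by positivity)]
        exact ha

include hN0 hNh hNt in
lemma N_lower : ∃ c : ℝ, 0 < c ∧ ∀ z, c * ‖z‖ ≤ N z := by
  by_cases hd : ∀ z : EuclideanSpace ℝ (Fin d), z = 0
  · exact ⟨1, one_pos, fun z => by rw [hd z]; simp [N_zero hN0 hNh]⟩
  · push_neg at hd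
    obtain ⟨z0, hz0⟩ := hd
    have hsphere : (Metric.sphere (0 : EuclideanSpace ℝ (Fin d)) 1).Nonempty :=
      ⟨‖z0‖⁻¹ • z0, by simp [norm_smul, inv_mul_cancel₀ (norm_ne_zero_iff.2 hz0)]⟩
    obtain ⟨m, hm_mem, hm⟩ := (isCompact_sphere (0 : EuclideanSpace ℝ (Fin d)) 1).exists_isMinOn
      hsphere (N_continuous hN0 hNh hNt).continuousOn
    have hmpos : 0 < N m := by
      rcases (N_nonneg hN0 hNh hNt m).lt_or_eq with h | h
      · exact h
      · exfalso
        have := (hN0 m).1 h.symm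
        rw [this] at hm_mem
        simp at hm_mem
    refine ⟨N m, hmpos, fun z => ?_⟩
    rcases eq_or_ne z 0 with rfl | hz
    · simp [N_zero hN0 hNh]
    · have hnz : ‖z‖ ≠ 0 := norm_ne_zero_iff.2 hz
      have hmem : ‖z‖⁻¹ • z ∈ Metric.sphere (0 : EuclideanSpace ℝ (Fin d)) 1 := by
        simp [norm_smul, inv_mul_cancel₀ hnz]
      have : N m ≤ N (‖z‖⁻¹ • z) := hm hmem
      rw [hNh] at this
      rw [abs_inv, abs_norm] at this
      have hpos : (0:ℝ) < ‖z‖ := lt_of_le_of_ne (norm_nonneg z) (Ne.symm hnz)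
      calc N m * ‖z‖ ≤ (‖z‖⁻¹ * N z) * ‖z‖ := by nlinarith
        _ = N z := by field_simp
end NormFacts

section RadProj
variable {d : ℕ} {N : EuclideanSpace ℝ (Fin d) → ℝ}

lemma radProj_zero (N : EuclideanSpace ℝ (Fin d) → ℝ) : radProj N 0 = 0 := by
  rw [radProj, if_pos rfl]

lemma radProj_of_ne {x : EuclideanSpace ℝ (Fin d)} (hx : x ≠ 0) :
    radProj N x = (N x)⁻¹ • x := by
  rw [radProj, if_neg hx]

variable (hN0 : ∀ x : EuclideanSpace ℝ (Fin d), N x = 0 ↔ x = 0)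
  (hNh : ∀ (a : ℝ) (x : EuclideanSpace ℝ (Fin d)), N (a • x) = |a| * N x)
  (hNt : ∀ x y : EuclideanSpace ℝ (Fin d), N (x + y) ≤ N x + N y)

include hN0 hNh hNt in
lemma N_radProj {x : EuclideanSpace ℝ (Fin d)} (hx : x ≠ 0) : N (radProj N x) = 1 := by
  have hNx : N x ≠ 0 := fun h => hx ((hN0 x).1 h)
  have hpos : 0 < N x := by
    rcases (N_nonneg hN0 hNh hNt x).lt_or_eq with h | h
    · exact h
    · exact absurd h.symm hNx
  rw [radProj_of_ne hx, hNh, abs_inv, abs_of_pos hpos, inv_mul_cancel₀ hNx]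

include hN0 hNh in
lemma radProj_smul {l : ℝ} (hl : 0 < l) (x : EuclideanSpace ℝ (Fin d)) :
    radProj N (l • x) = radProj N x := by
  rcases eq_or_ne x 0 with rfl | hx
  · rw [smul_zero]
  · have hlx : l • x ≠ 0 := smul_ne_zero hl.ne' hx
    have hNx : N x ≠ 0 := fun h => hx ((hN0 x).1 h)
    rw [radProj_of_ne hlx, radProj_of_ne hx, hNh, abs_of_pos hl, smul_smul]
    congr 1
    field_simp

include hN0 hNh hNt in
lemma smul_radProj {x : EuclideanSpace ℝ (Fin d)} (hx : x ≠ 0) :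
    N x • radProj N x = x := by
  have hNx : N x ≠ 0 := fun h => hx ((hN0 x).1 h)
  rw [radProj_of_ne hx, smul_smul, mul_inv_cancel₀ hNx, one_smul]

include hN0 hNh hNt in
lemma radProj_mem_ball (x : EuclideanSpace ℝ (Fin d)) : N (radProj N x) ≤ 1 := by
  rcases eq_or_ne x 0 with rfl | hx
  · rw [radProj_zero, N_zero hN0 hNh]; norm_num
  · rw [N_radProj hN0 hNh hNt hx]
end RadProj


lemma isCompact_convexHull_euclidean {d : ℕ} {s : Set (EuclideanSpace ℝ (Fin d))}
    (hs : IsCompact s) : IsCompact (convexHull ℝ s) := by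
  classical
  rcases s.eq_empty_or_nonempty with rfl | ⟨z₀, hz₀⟩
  · simp
  set n := d + 1 with hn
  set F : (Fin n → ℝ) × (Fin n → EuclideanSpace ℝ (Fin d)) → EuclideanSpace ℝ (Fin d) :=
    fun p => ∑ i, p.1 i • p.2 i with hF
  have hcont : Continuous F := by
    apply continuous_finset_sum
    intro i _
    exact ((continuous_apply i).comp continuous_fst).smul
      ((continuous_apply i).comp continuous_snd)
  have hcomp : IsCompact (F '' ((stdSimplex ℝ (Fin n)) ×ˢ (Set.univ.pi fun _ : Fin n => s))) :=
    (((isCompact_stdSimplex _ _).prod (isCompact_univ_pi fun _ => hs))).image hcont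
  have heq : convexHull ℝ s
      = F '' ((stdSimplex ℝ (Fin n)) ×ˢ (Set.univ.pi fun _ : Fin n => s)) := by
    apply Set.Subset.antisymm
    · intro x hx
      rw [convexHull_eq_union] at hx
      simp only [Set.mem_iUnion] at hx
      obtain ⟨t, hts, hai, hxt⟩ := hx
      have htne : t.Nonempty := by
        rcases t.eq_empty_or_nonempty with rfl | h
        · simp at hxt
        · exact h
      have hcard : t.card ≤ n := by
        have h1 := hai.card_le_finrank_succ
        have h2 : Module.finrank ℝ
            (vectorSpan ℝ (Set.range ((↑) : t → EuclideanSpace ℝ (Fin d)))) ≤ d := by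
          have h3 := Submodule.finrank_le
            (vectorSpan ℝ (Set.range ((↑) : t → EuclideanSpace ℝ (Fin d))))
          rwa [finrank_euclideanSpace_fin] at h3
        have h3 : Fintype.card t = t.card := Fintype.card_coe t
        omega
      rw [Finset.convexHull_eq] at hxt
      obtain ⟨w, hw0, hw1, hwx⟩ := hxt
      have hsum : ∑ y ∈ t, w y • y = x := by
        rw [← hwx, Finset.centerMass, hw1, inv_one, one_smul]
        simp
      set m := t.card with hm
      set e := t.equivFin with he
      set g : Fin n → EuclideanSpace ℝ (Fin d) :=
        fun i => if h : (i : ℕ) < m then (e.symm ⟨i, h⟩ : EuclideanSpace ℝ (Fin d)) else z₀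
        with hg
      set v : Fin n → ℝ := fun i => if h : (i : ℕ) < m then w (e.symm ⟨i, h⟩) else 0 with hv
      set T : Finset (Fin n) := Finset.univ.filter (fun i : Fin n => (i : ℕ) < m) with hT
      have hpair : ∑ i : Fin n, ((v i, v i • g i) : ℝ × EuclideanSpace ℝ (Fin d))
          = ∑ y ∈ t, ((w y, w y • y) : ℝ × EuclideanSpace ℝ (Fin d)) := by
        rw [← Finset.sum_subset (Finset.subset_univ T)
          (fun i _ hi => by
            have hni : ¬ ((i : ℕ) < m) := by simpa [hT] using hi
            simp [hv, hni, Prod.mk_eq_zero])]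
        refine Finset.sum_bij'
          (fun i hi => ((e.symm ⟨i, by simpa [hT] using hi⟩ : t) : EuclideanSpace ℝ (Fin d)))
          (fun y hy => Fin.castLE hcard (e ⟨y, hy⟩)) ?_ ?_ ?_ ?_ ?_
        · intro a ha
          exact (e.symm _).2
        · intro y hy
          simp [hT]
        · intro a ha
          apply Fin.ext
          simp [Fin.castLE]
        · intro y hy
          simp
        · intro a ha
          have h : (a : ℕ) < m := by simpa [hT] using ha
          simp [hv, hg, h]
      have hvsum : ∑ i : Fin n, v i = 1 := by
        have := congrArg Prod.fst hpair
        simpa [Prod.fst_sum, hw1] using this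
      have hgsum : ∑ i : Fin n, v i • g i = x := by
        have := congrArg Prod.snd hpair
        simpa [Prod.snd_sum, hsum] using this
      refine ⟨(v, g), ⟨⟨fun i => ?_, hvsum⟩, fun i _ => ?_⟩, hgsum⟩
      · by_cases h : (i : ℕ) < m
        · simpa [hv, h] using hw0 _ (e.symm ⟨i, h⟩).2
        · simp [hv, h]
      · by_cases h : (i : ℕ) < m
        · exact hts (by simpa [hg, h] using (e.symm ⟨i, h⟩).2)
        · simpa [hg, h] using hz₀
    · rintro _ ⟨⟨ww, gg⟩, ⟨hwsimp, hgs⟩, rfl⟩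
      exact mem_convexHull_of_exists_fintype ww gg (fun i => hwsimp.1 i) hwsimp.2
        (fun i => hgs i (Set.mem_univ i)) rfl
  rw [heq]; exact hcomp

section Milman
variable {d : ℕ} {N : EuclideanSpace ℝ (Fin d) → ℝ}
  (hN0 : ∀ x : EuclideanSpace ℝ (Fin d), N x = 0 ↔ x = 0)
  (hNh : ∀ (a : ℝ) (x : EuclideanSpace ℝ (Fin d)), N (a • x) = |a| * N x)
  (hNt : ∀ x y : EuclideanSpace ℝ (Fin d), N (x + y) ≤ N x + N y)
  (hrot : ∀ x : EuclideanSpace ℝ (Fin d), N x = 1 →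
    x ∈ Set.extremePoints ℝ {y : EuclideanSpace ℝ (Fin d) | N y ≤ 1})

include hN0 hNh hNt hrot in
lemma milman_step {A : Set (EuclideanSpace ℝ (Fin d))}
    (hA : A ⊆ {v : EuclideanSpace ℝ (Fin d) | N v ≤ 1})
    {u : EuclideanSpace ℝ (Fin d)} (hu1 : N u = 1)
    (hu : u ∈ closure (convexHull ℝ A)) : u ∈ closure A := by
  obtain ⟨c, hc, hcl⟩ := N_lower hN0 hNh hNt
  have hAb : Bornology.IsBounded A := by
    refine (Metric.isBounded_iff_subset_closedBall 0).2 ⟨c⁻¹, fun v hv => ?_⟩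
    have h1 : c * ‖v‖ ≤ 1 := (hcl v).trans (hA hv)
    have : ‖v‖ ≤ c⁻¹ := by
      rw [inv_eq_one_div, le_div_iff₀ hc, mul_comm]
      exact h1
    simpa [Metric.mem_closedBall, dist_eq_norm] using this
  have hclA : IsCompact (closure A) := hAb.isCompact_closure
  have hcomp : IsCompact (convexHull ℝ (closure A)) := isCompact_convexHull_euclidean hclA
  have hch : closure (convexHull ℝ A) = convexHull ℝ (closure A) :=
    subset_antisymm
      (closure_minimal (convexHull_mono subset_closure) hcomp.isClosed)
      (convexHull_min (closure_mono (subset_convexHull ℝ A)) (convex_convexHull ℝ A).closure)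
  have hBconv : Convex ℝ {v : EuclideanSpace ℝ (Fin d) | N v ≤ 1} := by
    intro a ha b hb p q hp hq hpq
    have h1 : N (p • a + q • b) ≤ N (p • a) + N (q • b) := hNt _ _
    have h2 : N (p • a) = p * N a := by rw [hNh, abs_of_nonneg hp]
    have h3 : N (q • b) = q * N b := by rw [hNh, abs_of_nonneg hq]
    have h4 : N a ≤ 1 := ha
    have h5 : N b ≤ 1 := hb
    have h6 : 0 ≤ N a := N_nonneg hN0 hNh hNt a
    have h7 : 0 ≤ N b := N_nonneg hN0 hNh hNt b
    simp only [Set.mem_setOf_eq]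
    nlinarith
  have hBclosed : IsClosed {v : EuclideanSpace ℝ (Fin d) | N v ≤ 1} :=
    isClosed_le (N_continuous hN0 hNh hNt) continuous_const
  have hsub : convexHull ℝ (closure A) ⊆ {v : EuclideanSpace ℝ (Fin d) | N v ≤ 1} :=
    convexHull_min (closure_minimal hA hBclosed) hBconv
  have hext := hrot u hu1
  rw [hch] at hu
  have hextT : u ∈ Set.extremePoints ℝ (convexHull ℝ (closure A)) := by
    rw [mem_extremePoints] at hext ⊢
    exact ⟨hu, fun x₁ h₁ x₂ h₂ hseg => hext.2 x₁ (hsub h₁) x₂ (hsub h₂) hseg⟩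
  exact extremePoints_convexHull_subset hextT
end Milman

section Main
variable {d : ℕ} {N : EuclideanSpace ℝ (Fin d) → ℝ}
  (hN0 : ∀ x : EuclideanSpace ℝ (Fin d), N x = 0 ↔ x = 0)
  (hNh : ∀ (a : ℝ) (x : EuclideanSpace ℝ (Fin d)), N (a • x) = |a| * N x)
  (hNt : ∀ x y : EuclideanSpace ℝ (Fin d), N (x + y) ≤ N x + N y)

include hN0 hNh hNt in
lemma N_pos {x : EuclideanSpace ℝ (Fin d)} (hx : x ≠ 0) : 0 < N x := by
  rcases (N_nonneg hN0 hNh hNt x).lt_or_eq with h | h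
  · exact h
  · exact absurd ((hN0 x).1 h.symm) hx
end Main

theorem stmt {d : ℕ} (N : EuclideanSpace ℝ (Fin d) → ℝ)
    (hN0 : ∀ x : EuclideanSpace ℝ (Fin d), N x = 0 ↔ x = 0)
    (hNh : ∀ (a : ℝ) (x : EuclideanSpace ℝ (Fin d)), N (a • x) = |a| * N x)
    (hNt : ∀ x y : EuclideanSpace ℝ (Fin d), N (x + y) ≤ N x + N y)
    (hrot : ∀ x : EuclideanSpace ℝ (Fin d), N x = 1 → x ∈ Set.extremePoints ℝ {y : EuclideanSpace ℝ (Fin d) | N y ≤ 1})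
    (K : Set (EuclideanSpace ℝ (Fin d))) :
    IsCapraConvex N K ↔
      ((∀ l : ℝ, 0 < l → ∀ x ∈ K, l • x ∈ K) ∧
        IsClosed (K ∪ {0}) ∧
        ((0 : EuclideanSpace ℝ (Fin d)) ∈ K ↔ (0 : EuclideanSpace ℝ (Fin d)) ∈ closure (convexHull ℝ (radProj N '' K)))) := by
  classical
  set A : Set (EuclideanSpace ℝ (Fin d)) := radProj N '' K with hA
  set C : Set (EuclideanSpace ℝ (Fin d)) := closure (convexHull ℝ A) with hC
  have hchar : IsCapraConvex N K ↔ ∀ x, (x ∈ K ↔ radProj N x ∈ C) := by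
    constructor
    · intro h x
      have hx := congrFun h x
      rw [capraBiconj_ind] at hx
      constructor
      · intro hxK
        by_contra hCmem
        rw [ind] at hx
        rw [if_pos hxK, if_neg hCmem] at hx
        exact (by simp : (0:EReal) ≠ ⊤) hx
      · intro hCmem
        by_contra hxK
        rw [ind] at hx
        rw [if_neg hxK, if_pos hCmem] at hx
        exact (by simp : (⊤:EReal) ≠ 0) hx
    · intro h
      unfold IsCapraConvex
      funext x
      rw [capraBiconj_ind, ind]
      by_cases hx : x ∈ K
      · rw [if_pos hx, if_pos ((h x).1 hx)]
      · rw [if_neg hx, if_neg (fun hc => hx ((h x).2 hc))]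
  rw [hchar]
  constructor
  · intro h
    refine ⟨?_, ?_, ?_⟩
    · intro l hl x hx
      rcases eq_or_ne x 0 with rfl | hxne
      · simpa [smul_zero] using hx
      · refine (h (l • x)).2 ?_
        rw [radProj_smul hN0 hNh hl]
        exact (h x).1 hx
    · apply isClosed_of_closure_subset
      intro x hx
      rcases eq_or_ne x 0 with rfl | hxne
      · exact Or.inr rfl
      · obtain ⟨u, humem, hulim⟩ := mem_closure_iff_seq_limit.1 hx
        have hev : ∀ᶠ n in Filter.atTop, u n ≠ 0 := hulim.eventually_ne hxne
        have hevK : ∀ᶠ n in Filter.atTop, u n ∈ K := by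
          filter_upwards [hev] with n hn
          rcases humem n with hK | h0
          · exact hK
          · exact absurd h0 hn
        have hNx : N x ≠ 0 := fun h' => hxne ((hN0 x).1 h')
        have hcont : ContinuousAt (fun y : EuclideanSpace ℝ (Fin d) => (N y)⁻¹ • y) x :=
          (((N_continuous hN0 hNh hNt).continuousAt).inv₀ hNx).smul continuousAt_id
        have h1 : Filter.Tendsto (fun n => (N (u n))⁻¹ • u n) Filter.atTop (nhds ((N x)⁻¹ • x)) :=
          hcont.tendsto.comp hulim
        have h2 : Filter.Tendsto (fun n => radProj N (u n)) Filter.atTop (nhds (radProj N x)) := by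
          rw [radProj_of_ne hxne]
          refine Filter.Tendsto.congr' ?_ h1
          filter_upwards [hev] with n hn
          rw [radProj_of_ne hn]
        have h3 : radProj N x ∈ closure A := mem_closure_of_tendsto h2 (by
          filter_upwards [hevK] with n hn
          exact Set.mem_image_of_mem _ hn)
        have h4 : radProj N x ∈ C := closure_mono (subset_convexHull ℝ A) h3
        exact Or.inl ((h x).2 h4)
    · have h0 := h 0
      rw [radProj_zero] at h0
      exact h0
  · rintro ⟨hcone, hclosed, h0⟩ x
    constructor
    · intro hx
      exact subset_closure (subset_convexHull ℝ A (Set.mem_image_of_mem _ hx))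
    · intro hx
      rcases eq_or_ne x 0 with rfl | hxne
      · rw [radProj_zero] at hx
        exact h0.2 hx
      · have hu1 : N (radProj N x) = 1 := N_radProj hN0 hNh hNt hxne
        have hA1 : A ⊆ {v : EuclideanSpace ℝ (Fin d) | N v ≤ 1} := by
          rintro _ ⟨k, hk, rfl⟩
          exact radProj_mem_ball hN0 hNh hNt k
        have hmem : radProj N x ∈ closure A :=
          milman_step hN0 hNh hNt hrot hA1 hu1 hx
        have hAK : A ⊆ K ∪ {0} := by
          rintro _ ⟨k, hk, rfl⟩
          rcases eq_or_ne k 0 with rfl | hkne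
          · right; simp [radProj_zero]
          · left
            have hNk : 0 < N k := N_pos hN0 hNh hNt hkne
            rw [radProj_of_ne hkne]
            exact hcone (N k)⁻¹ (by positivity) k hk
        rcases (closure_minimal hAK hclosed) hmem with hK | h0'
        · have hNx : 0 < N x := N_pos hN0 hNh hNt hxne
          have := hcone (N x) hNx _ hK
          rwa [smul_radProj hN0 hNh hNt hxne] at this
        · exfalso
          have hz : radProj N x = 0 := h0'
          rw [hz, N_zero hN0 hNh] at hu1
          norm_num at hu1
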